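/- For every real ε > 0 and every integer q ≥ 1 there exist a real δ > 0 and an integer p ≥ 1 such that the following holds. Let B be a Boolean algebra and let ν be a finitely additive probability measure on B. If x_1, …, x_p ∈ B satisfy ν(x_i) ≥ ε for all i ∈ {1,…,p}, then there is a set I ⊆ {1,…,p} with |I| = q such that ν(⨅_{i ∈ I} x_i) ≥ δ. -/

import Mathlib

open Finset

section BCBA

variable {B : Type} [BooleanAlgebra B]

theorem bcba_modular (ν : B → ℝ)
    (hadd : ∀ x y : B, x ⊓ y = ⊥ → ν (x ⊔ y) = ν x + ν y)
    (a b : B) : ν (a ⊔ b) + ν (a ⊓ b) = ν a + ν b := by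
  have h1 : ν (a ⊔ b \ a) = ν a + ν (b \ a) := hadd a (b \ a) (by simp)
  have h2 : ν (b ⊓ a ⊔ b \ a) = ν (b ⊓ a) + ν (b \ a) :=
    hadd (b ⊓ a) (b \ a) (inf_inf_sdiff b a)
  rw [sup_inf_sdiff b a] at h2
  rw [sup_sdiff_self_right] at h1
  rw [inf_comm a b]
  linarith

theorem bcba_mono (ν : B → ℝ) (h0 : ∀ x, 0 ≤ ν x)
    (hadd : ∀ x y : B, x ⊓ y = ⊥ → ν (x ⊔ y) = ν x + ν y)
    {a b : B} (hab : a ≤ b) : ν a ≤ ν b := by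
  have h1 : ν (a ⊔ b \ a) = ν a + ν (b \ a) := hadd a (b \ a) (by simp)
  rw [sup_sdiff_cancel_right hab] at h1
  have := h0 (b \ a)
  linarith

theorem bcba_sup_le (ν : B → ℝ) (h0 : ∀ x, 0 ≤ ν x) (hbot : ν ⊥ = 0)
    (hadd : ∀ x y : B, x ⊓ y = ⊥ → ν (x ⊔ y) = ν x + ν y)
    {ι : Type*} (S : Finset ι) (f : ι → B) :
    ν (S.sup f) ≤ ∑ i ∈ S, ν (f i) := by
  induction S using Finset.cons_induction with
  | empty => simp [hbot]
  | cons a s ha ih =>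
      rw [Finset.sup_cons, Finset.sum_cons]
      have hm := bcba_modular ν hadd (f a) (s.sup f)
      have := h0 (f a ⊓ s.sup f)
      linarith



/-- `bcbaS x n m` = "at least m of x₀,…,x_{n-1} hold". -/
def bcbaS (x : ℕ → B) (n m : ℕ) : B :=
  ((Finset.range n).powersetCard m).sup (fun I => I.inf x)

theorem bcbaS_zero (x : ℕ → B) (n : ℕ) : bcbaS x n 0 = ⊤ := by
  simp [bcbaS, powersetCard_zero]

theorem bcbaS_big (x : ℕ → B) {n m : ℕ} (h : n < m) : bcbaS x n m = ⊥ := by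
  have : (Finset.range n).powersetCard m = ∅ :=
    powersetCard_eq_empty.mpr (by simpa using h)
  simp [bcbaS, this]

theorem bcbaS_anti (x : ℕ → B) (n : ℕ) {k m : ℕ} (hkm : k ≤ m) :
    bcbaS x n m ≤ bcbaS x n k := by
  apply Finset.sup_le
  intro I hI
  rw [mem_powersetCard] at hI
  obtain ⟨J, hJI, hJcard⟩ := Finset.exists_subset_card_eq (s := I) (hI.2 ▸ hkm)
  exact le_trans (Finset.inf_mono hJI)
    (Finset.le_sup (f := fun I => I.inf x)
      (mem_powersetCard.mpr ⟨hJI.trans hI.1, hJcard⟩))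

theorem bcbaS_succ (x : ℕ → B) (n m : ℕ) :
    bcbaS x (n + 1) (m + 1) = bcbaS x n (m + 1) ⊔ (x n ⊓ bcbaS x n m) := by
  unfold bcbaS
  rw [Finset.range_add_one, powersetCard_succ_insert (by simp), Finset.sup_union,
    Finset.sup_image]
  congr 1
  rw [Finset.sup_inf_distrib_left]
  apply Finset.sup_congr rfl
  intro I hI
  have hn : n ∉ I := by
    rw [mem_powersetCard] at hI
    exact fun hc => (by simpa using hI.1 hc)
  simp [Function.comp, Finset.inf_insert]

theorem bcba_layer (ν : B → ℝ)
    (hbot : ν ⊥ = 0) (htop : ν ⊤ = 1)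
    (hadd : ∀ x y : B, x ⊓ y = ⊥ → ν (x ⊔ y) = ν x + ν y)
    (x : ℕ → B) (n : ℕ) :
    ∑ i ∈ Finset.range n, ν (x i) = ∑ m ∈ Finset.range n, ν (bcbaS x n (m + 1)) := by
  induction n with
  | zero => simp
  | succ n ih =>
      have key : ∀ m, ν (bcbaS x (n+1) (m+1)) =
          ν (bcbaS x n (m+1)) + (ν (bcbaS x n m ⊓ x n) - ν (bcbaS x n (m+1) ⊓ x n)) := by
        intro m
        have hm := bcba_modular ν hadd (bcbaS x n (m+1)) (x n ⊓ bcbaS x n m)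
        have h1 : bcbaS x n (m+1) ⊓ (x n ⊓ bcbaS x n m) = bcbaS x n (m+1) ⊓ x n := by
          rw [inf_comm (x n), ← inf_assoc,
            inf_eq_left.mpr (bcbaS_anti x n (Nat.le_succ m))]
        rw [h1] at hm
        rw [bcbaS_succ, inf_comm (bcbaS x n m) (x n)]
        linarith
      rw [Finset.sum_congr rfl (fun m _ => key m), Finset.sum_add_distrib,
        Finset.sum_range_sub' (fun m => ν (bcbaS x n m ⊓ x n)),
        Finset.sum_range_succ (fun m => ν (bcbaS x n (m + 1))),
        bcbaS_big x (Nat.lt_succ_self n), hbot,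
        bcbaS_zero, top_inf_eq, bot_inf_eq, hbot,
        Finset.sum_range_succ, ih]
      ring


theorem bcba_inf_attachFin (x : Fin p → B) (I : Finset ℕ) (H : ∀ m ∈ I, m < p) :
    (I.attachFin H).inf x = I.inf (fun i => if h : i < p then x ⟨i, h⟩ else ⊤) := by
  apply le_antisymm
  · apply Finset.le_inf
    intro m hm
    have : (⟨m, H m hm⟩ : Fin p) ∈ I.attachFin H := (Finset.mem_attachFin H).mpr hm
    refine le_trans (Finset.inf_le this) ?_
    rw [dif_pos (H m hm)]
  · apply Finset.le_inf
    intro j hj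
    have hjI : (j : ℕ) ∈ I := (Finset.mem_attachFin H).mp hj
    refine le_trans (Finset.inf_le hjI) ?_
    rw [dif_pos j.isLt]

end BCBA

/-- **Borel–Cantelli-type lemma for finitely additive measures.**  For every `ε > 0` and
`q ≥ 1` there are `δ > 0` and `p ≥ 1` such that: if `ν` is a finitely additive probability
measure on a Boolean algebra `B` and `x₁,…,x_p ∈ B` all have `ν(xᵢ) ≥ ε`, then some
`q`-element subset `I ⊆ {1,…,p}` satisfies `ν(⨅_{i ∈ I} xᵢ) ≥ δ`. -/
theorem borel_cantelli_boolean_algebra :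
    ∀ ε : ℝ, 0 < ε → ∀ q : ℕ, 1 ≤ q → ∃ δ : ℝ, 0 < δ ∧ ∃ p : ℕ, 1 ≤ p ∧
      ∀ (B : Type) (_ : BooleanAlgebra B) (ν : B → ℝ),
        (∀ x, 0 ≤ ν x) → ν ⊥ = 0 → ν ⊤ = 1 →
        (∀ x y : B, x ⊓ y = ⊥ → ν (x ⊔ y) = ν x + ν y) →
        ∀ x : Fin p → B, (∀ i, ε ≤ ν (x i)) →
        ∃ I : Finset (Fin p), I.card = q ∧ δ ≤ ν (I.inf x) := by
  intro ε hε q hq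
  set p : ℕ := q * ⌈1 / ε⌉₊ with hp
  have hceil1 : 1 ≤ ⌈1 / ε⌉₊ := Nat.one_le_ceil_iff.mpr (by positivity)
  have hqp : q ≤ p := by
    calc q = q * 1 := (mul_one q).symm
    _ ≤ q * ⌈1 / ε⌉₊ := Nat.mul_le_mul_left q hceil1
  have hp1 : 1 ≤ p := le_trans hq hqp
  have hppos : (0:ℝ) < p := by exact_mod_cast hp1
  have hCpos : (0:ℝ) < p.choose q := by exact_mod_cast Nat.choose_pos hqp
  have hpε : (q : ℝ) ≤ ε * p := by
    have h1 : (1:ℝ) / ε ≤ ⌈1 / ε⌉₊ := Nat.le_ceil _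
    have : (q:ℝ) / ε ≤ (q:ℝ) * ⌈1 / ε⌉₊ := by
      rw [div_eq_mul_one_div]
      exact mul_le_mul_of_nonneg_left h1 (by positivity)
    rw [div_le_iff₀ hε] at this
    calc (q:ℝ) ≤ (q:ℝ) * ⌈1 / ε⌉₊ * ε := this
    _ = ε * p := by push_cast [hp]; ring
  refine ⟨1 / (p * p.choose q), by positivity, p, hp1, ?_⟩
  intro B _inst ν h0 hbot htop hadd x hx
  set x' : ℕ → B := fun i => if h : i < p then x ⟨i, h⟩ else ⊤ with hx'
  have hx'ε : ∀ i ∈ Finset.range p, ε ≤ ν (x' i) := by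
    intro i hi
    rw [Finset.mem_range] at hi
    simpa [hx', dif_pos hi] using hx ⟨i, hi⟩
  -- lower bound total measure
  have hsum : ε * p ≤ ∑ i ∈ Finset.range p, ν (x' i) := by
    calc ε * p = ∑ _i ∈ Finset.range p, ε := by
          rw [Finset.sum_const, Finset.card_range, nsmul_eq_mul]; ring
    _ ≤ ∑ i ∈ Finset.range p, ν (x' i) := Finset.sum_le_sum hx'ε
  rw [bcba_layer ν hbot htop hadd x' p] at hsum
  -- upper bound layer sum
  have hbound : ∀ m ∈ Finset.range p, ν (bcbaS x' p (m + 1)) ≤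
      (if m + 1 < q then (1:ℝ) else 0) + ν (bcbaS x' p q) := by
    intro m _
    by_cases h : m + 1 < q
    · rw [if_pos h]
      have h1 : ν (bcbaS x' p (m+1)) ≤ ν ⊤ :=
        bcba_mono ν h0 hadd le_top
      have := h0 (bcbaS x' p q)
      rw [htop] at h1
      linarith
    · rw [if_neg h, zero_add]
      exact bcba_mono ν h0 hadd (bcbaS_anti x' p (Nat.le_of_not_lt h))
  have hlayer : ∑ m ∈ Finset.range p, ν (bcbaS x' p (m + 1)) ≤
      ((q:ℝ) - 1) + p * ν (bcbaS x' p q) := by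
    calc ∑ m ∈ Finset.range p, ν (bcbaS x' p (m + 1))
        ≤ ∑ m ∈ Finset.range p,
            ((if m + 1 < q then (1:ℝ) else 0) + ν (bcbaS x' p q)) :=
          Finset.sum_le_sum hbound
    _ = (∑ m ∈ Finset.range p, (if m + 1 < q then (1:ℝ) else 0))
          + p * ν (bcbaS x' p q) := by
          rw [Finset.sum_add_distrib, Finset.sum_const, Finset.card_range,
            nsmul_eq_mul]
    _ ≤ ((q:ℝ) - 1) + p * ν (bcbaS x' p q) := by
          gcongr
          calc ∑ m ∈ Finset.range p, (if m + 1 < q then (1:ℝ) else 0)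
              = ((Finset.range p).filter (fun m => m + 1 < q)).card := by
                rw [Finset.sum_boole]
          _ ≤ ((Finset.range (q-1)).card : ℝ) := by
                have : (Finset.range p).filter (fun m => m + 1 < q) ⊆
                    Finset.range (q - 1) := by
                  intro m hm
                  simp only [Finset.mem_filter, Finset.mem_range] at hm ⊢
                  omega
                exact_mod_cast Finset.card_le_card this
          _ ≤ (q:ℝ) - 1 := by
                rw [Finset.card_range, Nat.cast_sub hq, Nat.cast_one]

  have hsq : 1 / (p:ℝ) ≤ ν (bcbaS x' p q) := by
    have h1 : ε * p ≤ ((q:ℝ) - 1) + p * ν (bcbaS x' p q) := le_trans hsum hlayer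
    rw [div_le_iff₀ hppos]
    nlinarith
  -- subadditivity over q-subsets
  set S : Finset (Finset ℕ) := (Finset.range p).powersetCard q with hS
  have hScard : S.card = p.choose q := by
    rw [hS, Finset.card_powersetCard, Finset.card_range]
  have hSne : S.Nonempty := by
    rw [← Finset.card_pos, hScard]
    exact Nat.choose_pos hqp
  have hsub : ν (bcbaS x' p q) ≤ ∑ I ∈ S, ν (I.inf x') :=
    bcba_sup_le ν h0 hbot hadd S (fun I => I.inf x')
  have havg : ∃ I ∈ S, ν (bcbaS x' p q) / (p.choose q : ℝ) ≤ ν (I.inf x') := by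
    apply Finset.exists_le_of_sum_le hSne
    rw [Finset.sum_const, hScard, nsmul_eq_mul, mul_div_cancel₀ _ (ne_of_gt hCpos)]
    exact hsub
  obtain ⟨I, hIS, hIν⟩ := havg
  obtain ⟨hIsub, hIcard⟩ := Finset.mem_powersetCard.mp hIS
  have hIlt : ∀ m ∈ I, m < p := fun m hm => Finset.mem_range.mp (hIsub hm)
  refine ⟨I.attachFin hIlt, ?_, ?_⟩
  · rw [Finset.card_attachFin, hIcard]
  · rw [bcba_inf_attachFin x I hIlt]
    refine le_trans ?_ hIν
    have h2 : 1 / ((p:ℝ) * p.choose q) = (1 / (p:ℝ)) / (p.choose q) := by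
      field_simp
    rw [h2]
    gcongr
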